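/- Sufficiency of dual feasibility for collision avoidance (original formulation): if there exist λ ≥ 0, μ ≥ 0 with −λᵀ d − μᵀ b ≥ d_safe, ‖Aᵀ μ‖ = 1, and Cᵀ λ + Aᵀ μ = 0, then sd(V, O) ≥ d_safe for the polyhedra V = {x : C x ≤ d}, O = {x : A x ≤ b}. -/

import Mathlib

open Matrix

def toE (v : Fin 2 → ℝ) : EuclideanSpace ℝ (Fin 2) := WithLp.toLp 2 v

noncomputable def distSet (V O : Set (EuclideanSpace ℝ (Fin 2))) : ℝ :=
  sInf {r : ℝ | ∃ z : EuclideanSpace ℝ (Fin 2), r = ‖z‖ ∧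
    (((fun v => v + z) '' V) ∩ O).Nonempty}

noncomputable def penSet (V O : Set (EuclideanSpace ℝ (Fin 2))) : ℝ :=
  sInf {r : ℝ | ∃ z : EuclideanSpace ℝ (Fin 2), r = ‖z‖ ∧
    ¬(((fun v => v + z) '' V) ∩ O).Nonempty}

noncomputable def sd (V O : Set (EuclideanSpace ℝ (Fin 2))) : ℝ :=
  distSet V O - penSet V O

lemma inner_toE (a c : Fin 2 → ℝ) : @inner ℝ _ _ (toE a) (toE c) = a ⬝ᵥ c := by
  simp [toE, PiLp.inner_apply, RCLike.inner_apply, dotProduct, mul_comm]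

/-- sufficiency, original formulation: if there exist `λ ≥ 0`, `μ ≥ 0` with
`−λᵀd − μᵀb ≥ d_safe`, `‖Aᵀμ‖ = 1` and `Cᵀλ + Aᵀμ = 0`, then `sd(V, O) ≥ d_safe`. -/
theorem dual_feasibility_implies_collision_avoidance_original {L Lm : ℕ}
    (C : Matrix (Fin L) (Fin 2) ℝ) (d : Fin L → ℝ)
    (A : Matrix (Fin Lm) (Fin 2) ℝ) (b : Fin Lm → ℝ)
    (V O : Set (EuclideanSpace ℝ (Fin 2)))
    (hV : V = {x | ∀ i, C.mulVec (WithLp.ofLp x) i ≤ d i})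
    (hO : O = {x | ∀ i, A.mulVec (WithLp.ofLp x) i ≤ b i})
    (hVne : V.Nonempty) (hOne : O.Nonempty)
    (hVc : IsCompact V) (hOc : IsCompact O)
    (dsafe : ℝ)
    (h : ∃ (lam : Fin L → ℝ) (mu : Fin Lm → ℝ),
      0 ≤ lam ∧ 0 ≤ mu ∧
      -(lam ⬝ᵥ d) - mu ⬝ᵥ b ≥ dsafe ∧
      ‖toE (Aᵀ.mulVec mu)‖ = 1 ∧
      Cᵀ.mulVec lam + Aᵀ.mulVec mu = 0) :
    sd V O ≥ dsafe := by
  obtain ⟨lam, mu, hlam, hmu, hineq, hnorm, hsum⟩ := h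
  set y : Fin 2 → ℝ := Aᵀ.mulVec mu with hy
  have hyy : y ⬝ᵥ y = 1 := by
    have := real_inner_self_eq_norm_sq (toE y)
    rw [inner_toE, hnorm] at this
    simpa using this
  have hkey : ∀ v ∈ V, ∀ o ∈ O, dsafe ≤ y ⬝ᵥ (fun i => v i - o i) := by
    intro v hv o ho
    rw [hV] at hv; rw [hO] at ho
    have h1 : lam ⬝ᵥ (C.mulVec v) ≤ lam ⬝ᵥ d :=
      Finset.sum_le_sum fun i _ => mul_le_mul_of_nonneg_left (hv i) (hlam i)
    have h2 : mu ⬝ᵥ (A.mulVec o) ≤ mu ⬝ᵥ b :=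
      Finset.sum_le_sum fun i _ => mul_le_mul_of_nonneg_left (ho i) (hmu i)
    have hyneg : y = -(Cᵀ.mulVec lam) := by
      rw [hy, eq_neg_iff_add_eq_zero, add_comm]; exact hsum
    have hyv : y ⬝ᵥ (fun i => v i) = -(lam ⬝ᵥ (C.mulVec v)) := by
      rw [hyneg]
      rw [neg_dotProduct, Matrix.mulVec_transpose, ← Matrix.dotProduct_mulVec]
    have hyo : y ⬝ᵥ (fun i => o i) = mu ⬝ᵥ (A.mulVec o) := by
      rw [hy]
      rw [Matrix.mulVec_transpose, ← Matrix.dotProduct_mulVec]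
    have hsplit : y ⬝ᵥ (fun i => v i - o i)
        = y ⬝ᵥ (fun i => v i) - y ⬝ᵥ (fun i => o i) := by
      simp [dotProduct, mul_sub, Finset.sum_sub_distrib]
    rw [hsplit, hyv, hyo]
    linarith
  have hCS : ∀ z : EuclideanSpace ℝ (Fin 2), y ⬝ᵥ (fun i => z i) ≤ ‖z‖ := by
    intro z
    have h1 : @inner ℝ _ _ (toE y) z ≤ ‖toE y‖ * ‖z‖ := real_inner_le_norm _ _
    have h2 : @inner ℝ _ _ (toE y) z = y ⬝ᵥ (fun i => z i) := by
      simp [toE, PiLp.inner_apply, RCLike.inner_apply, dotProduct, mul_comm]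
    rw [h2, hnorm] at h1
    simpa using h1
  -- distSet lower bound
  have hdist : dsafe ≤ distSet V O := by
    apply le_csInf
    · obtain ⟨v0, hv0⟩ := hVne
      obtain ⟨o0, ho0⟩ := hOne
      exact ⟨‖o0 - v0‖, o0 - v0, rfl, ⟨o0, ⟨v0, hv0, by module⟩, ho0⟩⟩
    · rintro r ⟨z, rfl, x, ⟨v, hv, rfl⟩, hxO⟩
      have hk := hkey v hv _ hxO
      have : (fun i => v i - (v + z) i) = (fun i => (-z) i) := by
        funext i; simp
      rw [this] at hk
      have := hCS (-z)
      rw [norm_neg] at this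
      linarith
  have hdist0 : (0:ℝ) ≤ distSet V O := by
    apply le_csInf
    · obtain ⟨v0, hv0⟩ := hVne
      obtain ⟨o0, ho0⟩ := hOne
      exact ⟨‖o0 - v0‖, o0 - v0, rfl, ⟨o0, ⟨v0, hv0, by module⟩, ho0⟩⟩
    · rintro r ⟨z, rfl, -⟩; exact norm_nonneg _
  have hbdd : BddBelow {r : ℝ | ∃ z : EuclideanSpace ℝ (Fin 2), r = ‖z‖ ∧
      ¬(((fun v => v + z) '' V) ∩ O).Nonempty} := by
    refine ⟨0, ?_⟩
    rintro r ⟨z, rfl, -⟩; exact norm_nonneg _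
  -- pen membership for t > -dsafe
  have hpenmem : ∀ t : ℝ, -dsafe < t → penSet V O ≤ |t| := by
    intro t ht
    apply csInf_le hbdd
    refine ⟨t • toE y, by simp [norm_smul, hnorm], ?_⟩
    rintro ⟨x, ⟨v, hv, rfl⟩, hxO⟩
    have hk := hkey v hv _ hxO
    have heq : (fun i => v i - (v + t • toE y) i) = (fun i => ((-t) • y) i) := by
      funext i
      simp [toE]
    rw [heq] at hk
    have : y ⬝ᵥ ((-t) • y) = -t := by
      rw [dotProduct_smul, hyy]; simp
    rw [show (fun i => ((-t) • y) i) = (-t) • y from rfl, this] at hk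
    linarith
  unfold sd
  rcases le_or_gt dsafe 0 with hd | hd
  · have hpen : penSet V O ≤ -dsafe := by
      refine le_of_forall_pos_le_add ?_
      intro ε hε
      have := hpenmem (-dsafe + ε) (by linarith)
      rwa [abs_of_pos (by linarith)] at this
    linarith
  · have hpen : penSet V O ≤ 0 := by simpa using hpenmem 0 (by linarith)
    linarith
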